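/- Let f be a real polynomial of degree n with only real roots, x_{n-1} the root of f^{(n-1)}, x_{n-2} a root of f^{(n-2)}, and let ξ be any root of f^{(m)} for 0 ≤ m ≤ n−2. Then |ξ − x_{n-1}| ≤ (n − m − 1)|x_{n-1} − x_{n-2}|. -/

import Mathlib

open Polynomial Multiset

lemma esymm_one' (s : Multiset ℝ) : s.esymm 1 = s.sum := by
  simp [Multiset.esymm, powersetCard_one, Multiset.map_map, Function.comp_def]

lemma esymm_two_cons (a : ℝ) (s : Multiset ℝ) :
    (a ::ₘ s).esymm 2 = a * s.sum + s.esymm 2 := by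
  simp only [Multiset.esymm, powersetCard_cons, Multiset.map_add, Multiset.sum_add,
    Multiset.map_map, Function.comp_def, Multiset.prod_cons]
  rw [add_comm]
  congr 1
  rw [powersetCard_one, Multiset.map_map, Function.comp_def]
  simp only [Multiset.prod_singleton]
  exact (Multiset.sum_map_mul_left).trans (by simp)

lemma sq_sum_esymm (s : Multiset ℝ) :
    s.sum ^ 2 = (s.map (fun b => b ^ 2)).sum + 2 * s.esymm 2 := by
  induction s using Multiset.induction with
  | empty => simp [Multiset.esymm, Multiset.powersetCard_zero_right]
  | cons a s ih =>
      rw [Multiset.sum_cons, esymm_two_cons, Multiset.map_cons, Multiset.sum_cons]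
      ring_nf
      nlinarith [ih]

lemma ms_cauchy (t : Multiset ℝ) : t.sum ^ 2 ≤ t.card * (t.map (fun b => b ^ 2)).sum := by
  induction t using Multiset.induction with
  | empty => simp
  | cons a t ih =>
      simp only [Multiset.sum_cons, Multiset.card_cons, Multiset.map_cons]
      have hQ : (0:ℝ) ≤ (t.map (fun b => b ^ 2)).sum :=
        Multiset.sum_nonneg (by intro x hx; obtain ⟨b, _, rfl⟩ := Multiset.mem_map.1 hx; positivity)
      have hc : (0:ℝ) ≤ (t.card : ℝ) := by positivity
      push_cast
      rcases eq_or_ne t.card 0 with h0 | h0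
      · rw [Multiset.card_eq_zero] at h0; subst h0; simp
      · have hc' : (0:ℝ) < (t.card : ℝ) := by positivity
        nlinarith [sq_nonneg ((t.card : ℝ) * a - t.sum), ih]

lemma sum_sq_shift (s : Multiset ℝ) (c : ℝ) :
    (s.map (fun b => (b - c)^2)).sum
      = (s.map (fun b => b^2)).sum - 2*c*s.sum + s.card * c^2 := by
  induction s using Multiset.induction with
  | empty => simp
  | cons a s ih => simp only [Multiset.map_cons, Multiset.sum_cons, Multiset.card_cons, ih]
                   push_cast; ring

lemma sum_map_sub_const (s : Multiset ℝ) (c : ℝ) :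
    (s.map (fun b => b - c)).sum = s.sum - s.card * c := by
  induction s using Multiset.induction with
  | empty => simp
  | cons a s ih => simp only [Multiset.map_cons, Multiset.sum_cons, Multiset.card_cons, ih]
                   push_cast; ring

lemma key_ineq (T D K : ℝ) (hK : 2 ≤ K)
    (h : T^2 ≤ (K-1)*(K*(K-1)*D^2 - T^2)) : T^2 ≤ (K-1)^2*D^2 := by
  nlinarith [sq_nonneg D, sq_nonneg T]

lemma roots_card_iter (f : ℝ[X]) (n : ℕ) (hdeg : f.natDegree = n)
    (hreal : f.roots.card = n) (j : ℕ) (hj : j ≤ n) :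
    (derivative^[j] f).roots.card = n - j := by
  induction j with
  | zero => simpa
  | succ j ih =>
    have h1 := ih (by omega)
    have h2 := Polynomial.card_roots_le_derivative (derivative^[j] f)
    rw [show derivative ((⇑derivative)^[j] f) = (⇑derivative)^[j+1] f from
      (Function.iterate_succ_apply' _ _ _).symm] at h2
    have h3 : (derivative^[j+1] f).natDegree ≤ n - (j+1) :=
      hdeg ▸ Polynomial.natDegree_iterate_derivative f (j+1)
    have h4 := Polynomial.card_roots' (derivative^[j+1] f)
    omega

theorem stmt_11 (n m : ℕ) (hn : 2 ≤ n) (hm : m ≤ n - 2) (f : ℝ[X]) (hdeg : f.natDegree = n)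
    (hreal : f.roots.card = n)
    (xn1 : ℝ) (hxn1 : (derivative^[n - 1] f).eval xn1 = 0)
    (xn2 : ℝ) (hxn2 : (derivative^[n - 2] f).eval xn2 = 0)
    (ξ : ℝ) (hξ : (derivative^[m] f).eval ξ = 0) :
    |ξ - xn1| ≤ ((n : ℝ) - m - 1) * |xn1 - xn2| := by
  obtain ⟨i, hi⟩ : ∃ i, n - m = i + 2 := ⟨n - m - 2, by omega⟩
  set g : ℝ[X] := derivative^[m] f with hg
  clear_value g
  have hcard : g.roots.card = i + 2 := by
    rw [hg, roots_card_iter f n hdeg hreal m (by omega)]; omega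
  have hdegg : g.natDegree = i + 2 := by
    have h1 : g.natDegree ≤ n - m := by
      rw [hg, ← hdeg]; exact Polynomial.natDegree_iterate_derivative f m
    have h2 := Polynomial.card_roots' g
    omega
  have hg0 : g ≠ 0 := by
    intro h; rw [h] at hcard; simp at hcard
  have hlc : g.leadingCoeff ≠ 0 := leadingCoeff_ne_zero.mpr hg0
  set lc := g.leadingCoeff with hlcdef
  clear_value lc
  set s := g.roots with hs
  clear_value s
  -- Vieta
  have hcards : g.roots.card = g.natDegree := by rw [← hs, hcard, hdegg]
  have hc2 : g.coeff (i + 2) = lc := by rw [← hdegg, hlcdef]; exact coeff_natDegree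
  have hc1 : g.coeff (i + 1) = -(lc * s.sum) := by
    have h := coeff_eq_esymm_roots_of_card hcards (k := i + 1) (by omega : i + 1 ≤ g.natDegree)
    rw [hdegg, show i + 2 - (i + 1) = 1 by omega, ← hs, ← hlcdef, esymm_one'] at h
    rw [h]; ring
  have hc0 : g.coeff i = lc * s.esymm 2 := by
    have h := coeff_eq_esymm_roots_of_card hcards (k := i) (by omega : i ≤ g.natDegree)
    rw [hdegg, show i + 2 - i = 2 by omega, ← hs, ← hlcdef] at h
    rw [h]; ring
  -- rewrite derivative hypotheses
  have hiter1 : derivative^[n - 1] f = derivative^[i + 1] g := by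
    rw [hg, ← Function.iterate_add_apply]
    congr 1; omega
  have hiter2 : derivative^[n - 2] f = derivative^[i] g := by
    rw [hg, ← Function.iterate_add_apply]
    congr 1; omega
  rw [hiter1] at hxn1
  rw [hiter2] at hxn2
  have hd1 : (derivative^[i + 1] g).natDegree < 2 := by
    have := hdegg ▸ Polynomial.natDegree_iterate_derivative g (i + 1); omega
  have hd2 : (derivative^[i] g).natDegree < 3 := by
    have := hdegg ▸ Polynomial.natDegree_iterate_derivative g i; omega
  rw [eval_eq_sum_range' hd1, Finset.sum_range_succ, Finset.sum_range_succ,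
    Finset.sum_range_zero] at hxn1
  rw [eval_eq_sum_range' hd2, Finset.sum_range_succ, Finset.sum_range_succ,
    Finset.sum_range_succ, Finset.sum_range_zero] at hxn2
  simp only [coeff_iterate_derivative, zero_add, pow_zero, pow_one, mul_one, nsmul_eq_mul,
    zero_mul] at hxn1 hxn2
  rw [show 1 + (i + 1) = i + 2 by omega] at hxn1
  rw [show 1 + i = i + 1 by omega, show 2 + i = i + 2 by omega] at hxn2
  -- descFactorial values
  have dA : (i + 1).descFactorial (i + 1) = (i + 1).descFactorial i := by
    rw [Nat.descFactorial_succ]; simp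
  have dB : (i + 2).descFactorial (i + 2) = (i + 2).descFactorial (i + 1) := by
    rw [Nat.descFactorial_succ]; simp
  have dS1 : ((i + 1).descFactorial i : ℝ) = (Nat.factorial (i + 1)) := by
    rw [← dA, Nat.descFactorial_self]
  have dS2 : ((i + 2).descFactorial (i + 1) : ℝ) = (Nat.factorial (i + 2)) := by
    rw [← dB, Nat.descFactorial_self]
  set K : ℝ := (i : ℝ) + 2 with hK
  clear_value K
  have hfac2 : ((Nat.factorial (i + 2)) : ℝ) = K * ((Nat.factorial (i + 1)) : ℝ) := by
    rw [Nat.factorial_succ]; push_cast [hK]; ring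
  have hfac1 : ((Nat.factorial (i + 1)) : ℝ) = (K - 1) * ((Nat.factorial i) : ℝ) := by
    rw [Nat.factorial_succ]; push_cast [hK]; ring
  have h2D : 2 * ((i + 2).descFactorial i : ℝ) = K * (K - 1) * ((Nat.factorial i) : ℝ) := by
    have dC : (i + 2).descFactorial (i + 1) = 2 * (i + 2).descFactorial i := by
      rw [Nat.descFactorial_succ, show i + 2 - i = 2 by omega]
    have : (2 : ℝ) * ((i + 2).descFactorial i : ℝ) = ((Nat.factorial (i + 2)) : ℝ) := by
      rw [← dS2, dC]; push_cast; ring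
    rw [this, hfac2, hfac1]; ring
  -- equation 1
  rw [hc1, hc2, dA, dS1, dS2] at hxn1
  have he1 : s.sum = K * xn1 := by
    have hz : ((Nat.factorial (i + 1)) : ℝ) * lc * (K * xn1 - s.sum) = 0 := by
      linear_combination hxn1 - lc * xn1 * hfac2
    have hA : ((Nat.factorial (i + 1)) : ℝ) * lc ≠ 0 := mul_ne_zero (by positivity) hlc
    have := (mul_eq_zero.mp hz).resolve_left hA
    linarith
  -- equation 2
  rw [hc0, hc1, hc2, Nat.descFactorial_self, dS1] at hxn2
  have hQ : 2 * s.esymm 2 - 2 * (K - 1) * s.sum * xn2 + K * (K - 1) * xn2 ^ 2 = 0 := by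
    have hz : ((Nat.factorial i) : ℝ) * lc *
        (2 * s.esymm 2 - 2 * (K - 1) * s.sum * xn2 + K * (K - 1) * xn2 ^ 2) = 0 := by
      linear_combination 2 * hxn2 + 2 * lc * s.sum * xn2 * hfac1 - lc * xn2 ^ 2 * h2D
    have hA : ((Nat.factorial i) : ℝ) * lc ≠ 0 := mul_ne_zero (by positivity) hlc
    have := (mul_eq_zero.mp hz).resolve_left hA
    linarith
  -- variance identity
  have hsc : (s.card : ℝ) = K := by rw [hcard, hK]; push_cast; ring
  have hV : (s.map fun b => (b - xn1)^2).sum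
      = s.sum^2 - 2 * s.esymm 2 - 2*xn1*s.sum + K*xn1^2 := by
    rw [sum_sq_shift, hsc]
    have := sq_sum_esymm s
    linarith
  have hVval : (s.map fun b => (b - xn1)^2).sum = K * (K - 1) * (xn1 - xn2)^2 := by
    linear_combination hV - hQ + (s.sum + K*xn1 - 2*xn1 - 2*(K-1)*xn2) * he1
  -- split off ξ
  have hmem : ξ ∈ s := by rw [hs, mem_roots hg0]; exact hξ
  obtain ⟨r, hr⟩ : ∃ r, s = ξ ::ₘ r := ⟨s.erase ξ, (Multiset.cons_erase hmem).symm⟩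
  have hrcard : (r.card : ℝ) = K - 1 := by
    have h1 : s.card = r.card + 1 := by rw [hr, Multiset.card_cons]
    have h2 : r.card = i + 1 := by omega
    rw [h2, hK]; push_cast; ring
  have hsplit : (s.map fun b => (b - xn1)^2).sum
      = (ξ - xn1)^2 + (r.map fun b => (b - xn1)^2).sum := by
    rw [hr]; simp
  have hsum : s.sum = ξ + r.sum := by rw [hr]; simp
  have hW0 : (0:ℝ) ≤ (r.map fun b => (b - xn1)^2).sum :=
    Multiset.sum_nonneg (by intro x hx; obtain ⟨b, _, rfl⟩ := Multiset.mem_map.1 hx; positivity)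
  have hCS := ms_cauchy (r.map fun b => b - xn1)
  rw [Multiset.card_map, Multiset.map_map] at hCS
  simp only [Function.comp_def] at hCS
  rw [sum_map_sub_const, hrcard] at hCS
  have hRm : r.sum - (K - 1) * xn1 = -(ξ - xn1) := by
    have := he1; rw [hsum] at this; linarith
  rw [hRm, neg_sq] at hCS
  -- conclude
  have hK2 : (2:ℝ) ≤ K := by rw [hK]; have : (0:ℝ) ≤ (i:ℝ) := Nat.cast_nonneg i; linarith
  have hWeq : (r.map fun b => (b - xn1)^2).sum
      = K * (K - 1) * (xn1 - xn2)^2 - (ξ - xn1)^2 := by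
    rw [← hVval, hsplit]; ring
  rw [hWeq] at hCS
  have hT2 : (ξ - xn1)^2 ≤ ((K-1) * |xn1 - xn2|)^2 := by
    rw [mul_pow, sq_abs]
    exact key_ineq _ _ _ hK2 hCS
  have hnm : ((n:ℝ) - m - 1) = K - 1 := by
    have h1 : ((n - m : ℕ) : ℝ) = (n:ℝ) - m := Nat.cast_sub (by omega)
    rw [hi] at h1; push_cast at h1; rw [hK]; linarith
  rw [hnm]
  have hnn : (0:ℝ) ≤ (K - 1) * |xn1 - xn2| := mul_nonneg (by linarith) (abs_nonneg _)
  have := Real.sqrt_le_sqrt hT2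
  rwa [Real.sqrt_sq_eq_abs, Real.sqrt_sq hnn] at this
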